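/- arXiv:1312.1053 — 2 statements merged into one kernel-verified Lean document; each statement's English description precedes it below -/
import Mathlib

section
/- With f(k,a) = γ(a)k + β(a), γ(a)+β(a) = c as above, the measure π_f(·|a) is the unique probability measure ω(·|a) on ℕ satisfying the recursion ω(k|a) = (c/f(k,a)) · (1 - ∑_{j=0}^{k} ω(j|a)) for all k ≥ 0. -/
/-- The degree distribution `π_f(k|a)` of the fitness preferential attachment model. -/
noncomputable def piPA {X : Type*} (f : ℕ → X → ℝ) (c : ℝ) (k : ℕ) (a : X) : ℝ :=
  (c / (c + f k a)) * ∏ i ∈ Finset.range k, f i a / (c + f i a)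

/-- `π_f(·|a)` is the unique probability measure `ω` on ℕ satisfying the
recursion `ω(k) = (c/f(k,a)) (1 - ∑_{j=0}^k ω(j))` for all `k ≥ 0`. -/
theorem piPA_unique_solution_of_recursion
    {X : Type*} [Fintype X] (γ β : X → ℝ) (c : ℝ) (hc : 0 < c)
    (hγ : ∀ a, 0 < γ a) (hβ : ∀ a, 0 ≤ β a)
    (hsum : ∀ a, γ a + β a = c)
    (f : ℕ → X → ℝ) (hf : ∀ k a, f k a = γ a * k + β a)
    (hfpos : ∀ k a, 0 < f k a)
    (hdiv : ∀ a, ¬ Summable (fun k => 1 / f k a)) (a : X) :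
    ((∀ k, 0 ≤ piPA f c k a) ∧ HasSum (fun k => piPA f c k a) 1 ∧
      (∀ k, piPA f c k a
          = (c / f k a) * (1 - ∑ j ∈ Finset.range (k + 1), piPA f c j a)))
    ∧ ∀ ω : ℕ → ℝ, (∀ k, 0 ≤ ω k) → HasSum ω 1 →
        (∀ k, ω k = (c / f k a) * (1 - ∑ j ∈ Finset.range (k + 1), ω j)) →
        ω = fun k => piPA f c k a := by
  have hgpos : ∀ k, 0 < f k a := fun k => hfpos k a
  have hcg : ∀ k, 0 < c + f k a := fun k => by have := hgpos k; linarith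
  set P : ℕ → ℝ := fun n => ∏ i ∈ Finset.range n, f i a / (c + f i a) with hP
  have hPpos : ∀ n, 0 < P n := fun n =>
    Finset.prod_pos (fun i _ => div_pos (hgpos i) (hcg i))
  have hPsucc : ∀ n, P (n + 1) = P n * (f n a / (c + f n a)) := fun n =>
    Finset.prod_range_succ _ n
  have hpi : ∀ k, piPA f c k a = c / (c + f k a) * P k := fun k => rfl
  have hsum_eq : ∀ n, ∑ j ∈ Finset.range n, piPA f c j a = 1 - P n := by
    intro n
    induction n with
    | zero => simp [hP]
    | succ n ih =>
      rw [Finset.sum_range_succ, ih, hpi, hPsucc]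
      have h := (hcg n).ne'
      field_simp
      ring
  -- P n → 0
  have hbound : ∀ n, P n ≤ Real.exp (-(∑ i ∈ Finset.range n, 1 / (2 * ((i : ℝ) + 1)))) := by
    intro n
    have hmain : P n ≤ ∏ i ∈ Finset.range n, Real.exp (-(1 / (2 * ((i : ℝ) + 1)))) := by
      apply Finset.prod_le_prod
      · intro i _; exact le_of_lt (div_pos (hgpos i) (hcg i))
      · intro i _
        have h1 : f i a / (c + f i a) = 1 - c / (c + f i a) := by
          rw [eq_sub_iff_add_eq, ← add_div, add_comm (f i a) c,
            div_self (hcg i).ne']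
        have h2 : (1 : ℝ) / (2 * ((i : ℝ) + 1)) ≤ c / (c + f i a) := by
          have hγc : γ a ≤ c := by have := hβ a; have := hsum a; linarith
          have hβc : β a ≤ c := by have := (hγ a).le; have := hsum a; linarith
          have hfa : f i a ≤ c * ((i : ℝ) + 1) := by
            rw [hf]
            have hi : (0 : ℝ) ≤ (i : ℝ) := Nat.cast_nonneg i
            nlinarith
          have hle : c + f i a ≤ 2 * ((i : ℝ) + 1) * c := by nlinarith
          rw [div_le_div_iff₀ (by positivity) (hcg i)]
          nlinarith
        calc f i a / (c + f i a) = 1 - c / (c + f i a) := h1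
          _ ≤ 1 - 1 / (2 * ((i : ℝ) + 1)) := by linarith
          _ ≤ Real.exp (-(1 / (2 * ((i : ℝ) + 1)))) := by
              have := Real.add_one_le_exp (-(1 / (2 * ((i : ℝ) + 1))))
              linarith
    calc P n ≤ ∏ i ∈ Finset.range n, Real.exp (-(1 / (2 * ((i : ℝ) + 1)))) := hmain
      _ = Real.exp (∑ i ∈ Finset.range n, -(1 / (2 * ((i : ℝ) + 1)))) := (Real.exp_sum _ _).symm
      _ = Real.exp (-(∑ i ∈ Finset.range n, 1 / (2 * ((i : ℝ) + 1)))) := by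
          congr 1
          rw [← Finset.sum_neg_distrib]
  have hPto0 : Filter.Tendsto P Filter.atTop (nhds 0) := by
    have hdivsum : Filter.Tendsto
        (fun n => ∑ i ∈ Finset.range n, 1 / (2 * ((i : ℝ) + 1)))
        Filter.atTop Filter.atTop := by
      have h := Real.tendsto_sum_range_one_div_nat_succ_atTop
      have heq : (fun n => ∑ i ∈ Finset.range n, 1 / (2 * ((i : ℝ) + 1)))
          = fun n => (1 / 2) * ∑ i ∈ Finset.range n, 1 / ((i : ℝ) + 1) := by
        funext n
        rw [Finset.mul_sum]
        apply Finset.sum_congr rfl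
        intro i _
        have : (0:ℝ) < (i : ℝ) + 1 := by positivity
        field_simp
      rw [heq]
      exact h.const_mul_atTop (by norm_num)
    have hexp : Filter.Tendsto
        (fun n => Real.exp (-(∑ i ∈ Finset.range n, 1 / (2 * ((i : ℝ) + 1)))))
        Filter.atTop (nhds 0) :=
      Real.tendsto_exp_atBot.comp (Filter.tendsto_neg_atTop_atBot.comp hdivsum)
    exact tendsto_of_tendsto_of_tendsto_of_le_of_le tendsto_const_nhds hexp
      (fun n => (hPpos n).le) hbound
  have hpinn : ∀ k, 0 ≤ piPA f c k a := by
    intro k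
    rw [hpi]
    exact le_of_lt (mul_pos (div_pos hc (hcg k)) (hPpos k))
  have hHasSum : HasSum (fun k => piPA f c k a) 1 := by
    rw [hasSum_iff_tendsto_nat_of_nonneg hpinn 1]
    have : (fun n => ∑ i ∈ Finset.range n, piPA f c i a) = fun n => 1 - P n := by
      funext n; exact hsum_eq n
    rw [this]
    have := hPto0.const_sub (1 : ℝ)
    simpa using this
  -- the recursion for piPA
  have hrecpi : ∀ k, piPA f c k a
      = (c / f k a) * (1 - ∑ j ∈ Finset.range (k + 1), piPA f c j a) := by
    intro k
    rw [hsum_eq, hpi, hPsucc]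
    have h1 := (hgpos k).ne'
    have h2 := (hcg k).ne'
    field_simp
    ring
  -- uniqueness
  refine ⟨⟨hpinn, hHasSum, hrecpi⟩, ?_⟩
  intro ω hω0 hωsum hωrec
  have key : ∀ (ν : ℕ → ℝ),
      (∀ k, ν k = (c / f k a) * (1 - ∑ j ∈ Finset.range (k + 1), ν j)) →
      ∀ k, ν k = c / (c + f k a) * (1 - ∑ j ∈ Finset.range k, ν j) := by
    intro ν hν k
    have h := hν k
    rw [Finset.sum_range_succ] at h
    have h1 := (hgpos k).ne'
    have h2 := (hcg k).ne'
    have h3 : ν k * f k a = c * (1 - (∑ j ∈ Finset.range k, ν j + ν k)) := by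
      conv_lhs => rw [h]
      field_simp
    rw [div_mul_eq_mul_div, eq_div_iff h2]
    linear_combination h3
  have : ∀ k, ω k = piPA f c k a := by
    intro k
    induction k using Nat.strong_induction_on with
    | _ k ih =>
      rw [key ω hωrec k, key (fun j => piPA f c j a) hrecpi k]
      have : ∑ j ∈ Finset.range k, ω j = ∑ j ∈ Finset.range k, piPA f c j a :=
        Finset.sum_congr rfl (fun j hj => ih j (Finset.mem_range.mp hj))
      rw [this]
  funext k
  exact this k
end

section
/- For probability measures ω and ρ on a countable set S with ρ(s) > 0 whenever ω(s) > 0, the relative entropy admits the variational characterization H(ω ∥ ρ) = sup over bounded functions g : S → ℝ of [∑_s g(s)ω(s) − log ∑_s e^{g(s)} ρ(s)]. -/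
open Classical

/-- Relative entropy `H(ω ∥ ρ) = ∑_s ω(s) log(ω(s)/ρ(s))` of probability mass
functions on a countable set, with values in `EReal`: it is `+∞` if `ω` is not
absolutely continuous with respect to `ρ` or if the defining series does not
converge (for probability mass functions the negative part is always summable,
so non-summability means `H = +∞`). -/
noncomputable def relEnt {S : Type*} (ω ρ : S → ℝ) : EReal :=
  if (∀ s, ρ s = 0 → ω s = 0) ∧ Summable (fun s => ω s * Real.log (ω s / ρ s))
    then ((∑' s, ω s * Real.log (ω s / ρ s) : ℝ) : EReal) else ⊤

private lemma sub_le_mul_log_div {a b : ℝ} (ha : 0 ≤ a) (hb : 0 ≤ b)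
    (hab : b = 0 → a = 0) : a - b ≤ a * Real.log (a / b) := by
  rcases ha.eq_or_lt with h0 | ha'
  · simp only [← h0, zero_sub, zero_mul]
    linarith
  · have hb' : 0 < b := by
      rcases hb.eq_or_lt with h | h
      · exact absurd (hab h.symm) (ne_of_gt ha')
      · exact h
    have h1 : Real.log (b / a) ≤ b / a - 1 := Real.log_le_sub_one_of_pos (by positivity)
    have h2 : Real.log (b / a) = - Real.log (a / b) := by
      rw [← Real.log_inv]; congr 1; field_simp
    have h3 : 1 - b / a ≤ Real.log (a / b) := by rw [h2] at h1; linarith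
    have h4 := mul_le_mul_of_nonneg_left h3 ha'.le
    have h5 : a * (1 - b / a) = a - b := by field_simp
    linarith

private lemma ereal_le_of_forall_eps {x : ℝ} {y : EReal}
    (h : ∀ ε : ℝ, 0 < ε → ((x - ε : ℝ) : EReal) ≤ y) : (x : EReal) ≤ y := by
  induction y using EReal.rec with
  | bot => exact absurd (le_bot_iff.mp (h 1 one_pos)) (EReal.coe_ne_bot _)
  | coe c =>
    have h' : ∀ ε : ℝ, 0 < ε → x ≤ c + ε := fun ε hε => by
      have := EReal.coe_le_coe_iff.mp (h ε hε); linarith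
    exact EReal.coe_le_coe_iff.mpr (le_of_forall_pos_le_add h')
  | top => exact le_top

private lemma ereal_eq_top_of_forall_le {y : EReal}
    (h : ∀ M : ℝ, (M : EReal) ≤ y) : y = ⊤ := by
  induction y using EReal.rec with
  | bot => exact absurd (le_bot_iff.mp (h 0)) (EReal.coe_ne_bot _)
  | coe c =>
    have := EReal.coe_le_coe_iff.mp (h (c + 1))
    linarith
  | top => rfl

private lemma key_lower
    {S : Type*} [Countable S]
    (ω ρ : S → ℝ)
    (hωnn : ∀ s, 0 ≤ ω s) (hω : HasSum ω 1)
    (hρnn : ∀ s, 0 ≤ ρ s) (hρ : HasSum ρ 1)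
    (habs : ∀ s, 0 < ω s → 0 < ρ s)
    (A : Finset S) (hA : ∀ s ∈ A, 0 < ω s) (n : ℝ) (hn : 0 ≤ n) :
    ∃ g : {g : S → ℝ // ∃ C, ∀ s, |g s| ≤ C},
      (∑ s ∈ A, ω s * Real.log (ω s / ρ s)) - n * (1 - ∑ s ∈ A, ω s)
        - Real.log (1 + Real.exp (-n))
      ≤ (∑' s, g.1 s * ω s) - Real.log (∑' s, Real.exp (g.1 s) * ρ s) := by
  set g : S → ℝ := fun s => if s ∈ A then Real.log (ω s / ρ s) else -n with hg
  have hbd : ∃ C, ∀ s, |g s| ≤ C := by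
    refine ⟨n + ∑ s ∈ A, |Real.log (ω s / ρ s)|, fun s => ?_⟩
    by_cases hs : s ∈ A
    · simp only [hg, if_pos hs]
      have h1 : |Real.log (ω s / ρ s)| ≤ ∑ t ∈ A, |Real.log (ω t / ρ t)| :=
        Finset.single_le_sum (f := fun t => |Real.log (ω t / ρ t)|)
          (fun t _ => abs_nonneg _) hs
      linarith
    · simp only [hg, if_neg hs, abs_neg]
      have : (0:ℝ) ≤ ∑ t ∈ A, |Real.log (ω t / ρ t)| :=
        Finset.sum_nonneg fun t _ => abs_nonneg _
      rw [abs_of_nonneg hn]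
      linarith
  have hzero1 : ∀ s ∉ A, g s * ω s + n * ω s = 0 := by
    intro s hs; simp only [hg, if_neg hs]; ring
  have hsum1 : Summable (fun s => g s * ω s + n * ω s) := summable_of_ne_finset_zero hzero1
  have hωs := hω.summable
  have hsumgω : Summable (fun s => g s * ω s) := by
    have h := hsum1.sub (hωs.mul_left n)
    simpa using h
  have htsumgω : ∑' s, g s * ω s
      = (∑ s ∈ A, ω s * Real.log (ω s / ρ s)) - n * (1 - ∑ s ∈ A, ω s) := by
    have e1 : ∑' s, (g s * ω s + n * ω s) = ∑ s ∈ A, (g s * ω s + n * ω s) :=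
      tsum_eq_sum hzero1
    have e2 : ∑' s, (g s * ω s + n * ω s) = (∑' s, g s * ω s) + n * 1 := by
      rw [Summable.tsum_add hsumgω (hωs.mul_left n), tsum_mul_left, hω.tsum_eq]
    have e3 : ∑ s ∈ A, (g s * ω s + n * ω s)
        = (∑ s ∈ A, ω s * Real.log (ω s / ρ s)) + n * ∑ s ∈ A, ω s := by
      rw [Finset.sum_add_distrib, ← Finset.mul_sum]
      congr 1
      exact Finset.sum_congr rfl fun s hs => by simp only [hg, if_pos hs]; ring
    rw [e3] at e1
    rw [e2] at e1
    linarith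
  have hexp : ∀ s, Real.exp (g s) * ρ s
      = (if s ∈ A then ω s - Real.exp (-n) * ρ s else 0) + Real.exp (-n) * ρ s := by
    intro s
    by_cases hs : s ∈ A
    · have hω' := hA s hs
      have hρ' := habs s hω'
      simp only [hg, if_pos hs]
      rw [Real.exp_log (by positivity)]
      field_simp
      ring
    · simp [hg, if_neg hs]
  have hzero2 : ∀ s ∉ A, (if s ∈ A then ω s - Real.exp (-n) * ρ s else 0) = 0 := by
    intro s hs; simp [if_neg hs]
  have hρs := hρ.summable
  have hsumZ : Summable (fun s => Real.exp (g s) * ρ s) := by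
    have : Summable (fun s => (if s ∈ A then ω s - Real.exp (-n) * ρ s else 0)
        + Real.exp (-n) * ρ s) :=
      (summable_of_ne_finset_zero hzero2).add (hρs.mul_left _)
    exact this.congr fun s => (hexp s).symm
  have htsumZ : ∑' s, Real.exp (g s) * ρ s
      = (∑ s ∈ A, ω s) + Real.exp (-n) * (1 - ∑ s ∈ A, ρ s) := by
    calc ∑' s, Real.exp (g s) * ρ s
        = ∑' s, ((if s ∈ A then ω s - Real.exp (-n) * ρ s else 0) + Real.exp (-n) * ρ s) :=
          tsum_congr hexp
      _ = (∑ s ∈ A, (ω s - Real.exp (-n) * ρ s)) + Real.exp (-n) * 1 := by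
          rw [Summable.tsum_add (summable_of_ne_finset_zero hzero2) (hρs.mul_left _),
            tsum_eq_sum hzero2, tsum_mul_left, hρ.tsum_eq]
          congr 1
          exact Finset.sum_congr rfl fun s hs => by rw [if_pos hs]
      _ = (∑ s ∈ A, ω s) + Real.exp (-n) * (1 - ∑ s ∈ A, ρ s) := by
          rw [Finset.sum_sub_distrib, ← Finset.mul_sum]; ring
  have hAω : ∑ s ∈ A, ω s ≤ 1 := sum_le_hasSum A (fun s _ => hωnn s) hω
  have hAρnn : (0:ℝ) ≤ ∑ s ∈ A, ρ s := Finset.sum_nonneg fun s _ => hρnn s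
  have hZle : ∑' s, Real.exp (g s) * ρ s ≤ 1 + Real.exp (-n) := by
    rw [htsumZ]
    have h1 : Real.exp (-n) * (1 - ∑ s ∈ A, ρ s) ≤ Real.exp (-n) * 1 := by
      apply mul_le_mul_of_nonneg_left _ (Real.exp_pos _).le
      linarith
    linarith
  have hlogle : Real.log (∑' s, Real.exp (g s) * ρ s) ≤ Real.log (1 + Real.exp (-n)) := by
    have hZnn : (0:ℝ) ≤ ∑' s, Real.exp (g s) * ρ s :=
      tsum_nonneg fun s => mul_nonneg (Real.exp_pos _).le (hρnn s)
    rcases eq_or_lt_of_le hZnn with h | h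
    · rw [← h, Real.log_zero]
      exact Real.log_nonneg (by linarith [(Real.exp_pos (-n)).le])
    · exact Real.log_le_log h hZle
  exact ⟨⟨g, hbd⟩, by rw [htsumgω]; linarith⟩

private lemma gibbs
    {S : Type*} [Countable S]
    (ω ρ : S → ℝ)
    (hωnn : ∀ s, 0 ≤ ω s) (hω : HasSum ω 1)
    (hρnn : ∀ s, 0 ≤ ρ s) (hρ : HasSum ρ 1)
    (habs : ∀ s, 0 < ω s → 0 < ρ s)
    (hsum : Summable (fun s => ω s * Real.log (ω s / ρ s)))
    (g : S → ℝ) (C : ℝ) (hg : ∀ s, |g s| ≤ C) :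
    (∑' s, g s * ω s) - Real.log (∑' s, Real.exp (g s) * ρ s)
      ≤ ∑' s, ω s * Real.log (ω s / ρ s) := by
  have hωs := hω.summable
  have hρs := hρ.summable
  have hZsum : Summable (fun s => Real.exp (g s) * ρ s) := by
    refine Summable.of_nonneg_of_le (fun s => mul_nonneg (Real.exp_pos _).le (hρnn s))
      (fun s => ?_) (hρs.mul_left (Real.exp C))
    exact mul_le_mul_of_nonneg_right (Real.exp_le_exp.2 (abs_le.1 (hg s)).2) (hρnn s)
  set Z : ℝ := ∑' s, Real.exp (g s) * ρ s with hZ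
  have hZpos : 0 < Z := by
    have hle : ∀ s, Real.exp (-C) * ρ s ≤ Real.exp (g s) * ρ s := fun s =>
      mul_le_mul_of_nonneg_right (Real.exp_le_exp.2 (abs_le.1 (hg s)).1) (hρnn s)
    have h1 : Real.exp (-C) * 1 ≤ Z := by
      have := Summable.tsum_le_tsum hle (hρs.mul_left (Real.exp (-C))) hZsum
      rwa [tsum_mul_left, hρ.tsum_eq] at this
    have := Real.exp_pos (-C)
    linarith
  have hgωsum : Summable (fun s => g s * ω s) := by
    apply Summable.of_abs
    refine Summable.of_nonneg_of_le (fun s => abs_nonneg _) (fun s => ?_) (hωs.mul_left C)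
    rw [abs_mul, abs_of_nonneg (hωnn s)]
    exact mul_le_mul_of_nonneg_right (hg s) (hωnn s)
  have key : ∀ s, ω s - Real.exp (g s) * ρ s / Z
      ≤ ω s * Real.log (ω s / ρ s) - g s * ω s + ω s * Real.log Z := by
    intro s
    by_cases hωs0 : ω s = 0
    · simp only [hωs0, zero_sub, zero_mul, mul_zero, sub_zero, zero_add]
      have : (0:ℝ) ≤ Real.exp (g s) * ρ s / Z :=
        div_nonneg (mul_nonneg (Real.exp_pos _).le (hρnn s)) hZpos.le
      linarith
    · have hω' : 0 < ω s := (hωnn s).lt_of_ne (Ne.symm hωs0)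
      have hρ' := habs s hω'
      have hbpos : 0 < Real.exp (g s) * ρ s / Z :=
        div_pos (mul_pos (Real.exp_pos _) hρ') hZpos
      have key2 := sub_le_mul_log_div (a := ω s) (b := Real.exp (g s) * ρ s / Z)
        hω'.le hbpos.le (fun h => absurd h hbpos.ne')
      have hlog : Real.log (ω s / (Real.exp (g s) * ρ s / Z))
          = Real.log (ω s / ρ s) - g s + Real.log Z := by
        rw [Real.log_div hω'.ne' hbpos.ne', Real.log_div hω'.ne' hρ'.ne',
          Real.log_div (mul_pos (Real.exp_pos _) hρ').ne' hZpos.ne',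
          Real.log_mul (Real.exp_ne_zero _) hρ'.ne', Real.log_exp]
        ring
      rw [hlog] at key2
      have : ω s * (Real.log (ω s / ρ s) - g s + Real.log Z)
          = ω s * Real.log (ω s / ρ s) - g s * ω s + ω s * Real.log Z := by ring
      linarith
  have hL : Summable (fun s => ω s - Real.exp (g s) * ρ s / Z) :=
    hωs.sub (hZsum.div_const Z)
  have hR : Summable (fun s => ω s * Real.log (ω s / ρ s) - g s * ω s + ω s * Real.log Z) :=
    (hsum.sub hgωsum).add (hωs.mul_right (Real.log Z))
  have hmain := Summable.tsum_le_tsum key hL hR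
  have hLtsum : ∑' s, (ω s - Real.exp (g s) * ρ s / Z) = 0 := by
    rw [Summable.tsum_sub hωs (hZsum.div_const Z), hω.tsum_eq, tsum_div_const]
    field_simp
    rw [hZ]; ring
  have hRtsum : ∑' s, (ω s * Real.log (ω s / ρ s) - g s * ω s + ω s * Real.log Z)
      = (∑' s, ω s * Real.log (ω s / ρ s)) - (∑' s, g s * ω s) + Real.log Z := by
    rw [Summable.tsum_add (hsum.sub hgωsum) (hωs.mul_right (Real.log Z)), Summable.tsum_sub hsum hgωsum,
      tsum_mul_right, hω.tsum_eq, one_mul]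
  rw [hLtsum, hRtsum] at hmain
  linarith

/-- variational characterization of relative entropy on a countable set:
`H(ω ∥ ρ) = sup_{g bounded} [∑_s g(s)ω(s) − log ∑_s e^{g(s)} ρ(s)]`. -/
theorem relativeEntropy_variational
    {S : Type*} [Countable S]
    (ω ρ : S → ℝ)
    (hωnn : ∀ s, 0 ≤ ω s) (hω : HasSum ω 1)
    (hρnn : ∀ s, 0 ≤ ρ s) (hρ : HasSum ρ 1)
    (habs : ∀ s, 0 < ω s → 0 < ρ s) :
    relEnt ω ρ
      = ⨆ g : {g : S → ℝ // ∃ C, ∀ s, |g s| ≤ C},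
          (((∑' s, g.1 s * ω s) - Real.log (∑' s, Real.exp (g.1 s) * ρ s) : ℝ) : EReal) := by
  have habs' : ∀ s, ρ s = 0 → ω s = 0 := by
    intro s h
    by_contra h'
    have := habs s ((hωnn s).lt_of_ne (Ne.symm h'))
    rw [h] at this
    exact lt_irrefl 0 this
  have hωs := hω.summable
  have hρs := hρ.summable
  by_cases hsum : Summable (fun s => ω s * Real.log (ω s / ρ s))
  · rw [relEnt, if_pos ⟨habs', hsum⟩]
    set L : ℝ := ∑' s, ω s * Real.log (ω s / ρ s) with hLdef
    apply le_antisymm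
    · apply ereal_le_of_forall_eps
      intro ε hε
      set n : ℝ := max 0 (Real.log (3 / ε)) with hn
      have hn0 : 0 ≤ n := le_max_left _ _
      have hexpn : Real.exp (-n) ≤ ε / 3 := by
        have h1 : Real.log (3/ε) ≤ n := le_max_right _ _
        have h2 : Real.exp (-n) ≤ Real.exp (- Real.log (3/ε)) := Real.exp_le_exp.2 (by linarith)
        rw [← Real.log_inv, Real.exp_log (by positivity), inv_div] at h2
        exact h2
      have hlog1 : Real.log (1 + Real.exp (-n)) ≤ ε / 3 := by
        have := Real.log_le_sub_one_of_pos (x := 1 + Real.exp (-n)) (by positivity)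
        linarith
      have hev1 : ∀ᶠ F : Finset S in Filter.atTop,
          L - ε/3 < ∑ s ∈ F, ω s * Real.log (ω s / ρ s) :=
        hsum.hasSum.eventually (eventually_gt_nhds (by linarith))
      have hev2 : ∀ᶠ F : Finset S in Filter.atTop, 1 - ε/(3*(n+1)) < ∑ s ∈ F, ω s := by
        refine hω.eventually (eventually_gt_nhds ?_)
        have : 0 < ε/(3*(n+1)) := by positivity
        linarith
      obtain ⟨F, hF1, hF2⟩ := (hev1.and hev2).exists
      set A := F.filter (fun s => 0 < ω s) with hAdef
      have hAmem : ∀ s ∈ A, 0 < ω s := fun s hs => (Finset.mem_filter.mp hs).2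
      have hAf : ∑ s ∈ A, ω s * Real.log (ω s / ρ s)
          = ∑ s ∈ F, ω s * Real.log (ω s / ρ s) := by
        refine Finset.sum_filter_of_ne fun s _ hne => ?_
        rcases (hωnn s).eq_or_lt with h | h
        · exact absurd (by rw [← h]; ring) hne
        · exact h
      have hAω : ∑ s ∈ A, ω s = ∑ s ∈ F, ω s := by
        refine Finset.sum_filter_of_ne fun s _ hne => ?_
        exact (hωnn s).lt_of_ne (Ne.symm hne)
      obtain ⟨g, hg⟩ := key_lower ω ρ hωnn hω hρnn hρ habs A hAmem n hn0
      have hωle1 : ∑ s ∈ A, ω s ≤ 1 := sum_le_hasSum A (fun s _ => hωnn s) hω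
      have hval : L - ε ≤ (∑' s, g.1 s * ω s) - Real.log (∑' s, Real.exp (g.1 s) * ρ s) := by
        have h1 : L - ε/3 < ∑ s ∈ A, ω s * Real.log (ω s / ρ s) := by rw [hAf]; exact hF1
        have h2 : n * (1 - ∑ s ∈ A, ω s) ≤ ε/3 := by
          have h3 : 1 - ∑ s ∈ A, ω s ≤ ε/(3*(n+1)) := by rw [hAω]; linarith
          have h4 : n / (n+1) ≤ 1 := (div_le_one (by linarith)).2 (by linarith)
          have h5 : n * (ε/(3*(n+1))) = (n/(n+1)) * (ε/3) := by
            rw [div_mul_div_comm, ← mul_div_assoc, mul_comm 3 (n+1)]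
          calc n * (1 - ∑ s ∈ A, ω s) ≤ n * (ε/(3*(n+1))) :=
                mul_le_mul_of_nonneg_left h3 hn0
            _ = (n/(n+1)) * (ε/3) := h5
            _ ≤ 1 * (ε/3) := mul_le_mul_of_nonneg_right h4 (by linarith)
            _ = ε/3 := one_mul _
        linarith
      calc ((L - ε : ℝ) : EReal)
          ≤ (((∑' s, g.1 s * ω s) - Real.log (∑' s, Real.exp (g.1 s) * ρ s) : ℝ) : EReal) :=
            EReal.coe_le_coe_iff.2 hval
        _ ≤ _ := le_iSup (fun g : {g : S → ℝ // ∃ C, ∀ s, |g s| ≤ C} =>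
            (((∑' s, g.1 s * ω s) - Real.log (∑' s, Real.exp (g.1 s) * ρ s) : ℝ) : EReal)) g
    · refine iSup_le fun g => ?_
      obtain ⟨C, hC⟩ := g.2
      exact EReal.coe_le_coe_iff.2 (gibbs ω ρ hωnn hω hρnn hρ habs hsum g.1 C hC)
  · rw [relEnt, if_neg (fun h => hsum h.2)]
    refine (ereal_eq_top_of_forall_le fun M => ?_).symm
    set h : S → ℝ := fun s => ω s * Real.log (ω s / ρ s) - ω s + ρ s with hhdef
    have hnn : (0 : S → ℝ) ≤ h := by
      intro s
      have := sub_le_mul_log_div (hωnn s) (hρnn s) (habs' s)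
      simp only [hhdef, Pi.zero_apply]
      linarith
    have hns : ¬ Summable h := by
      intro hS
      apply hsum
      have h2 := (hS.add hωs).sub hρs
      refine h2.congr fun s => ?_
      simp only [hhdef]
      ring
    have hbig : ∃ F : Finset S, M + 4 ≤ ∑ s ∈ F, h s := by
      by_contra hc
      push_neg at hc
      exact hns (summable_of_sum_le hnn (fun u => (hc u).le))
    obtain ⟨F, hF⟩ := hbig
    set A := F.filter (fun s => 0 < ω s) with hAdef
    have hAmem : ∀ s ∈ A, 0 < ω s := fun s hs => (Finset.mem_filter.mp hs).2
    set B := F.filter (fun s => ¬ 0 < ω s) with hBdef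
    have hsplit : ∑ s ∈ A, h s + ∑ s ∈ B, h s = ∑ s ∈ F, h s :=
      Finset.sum_filter_add_sum_filter_not F _ h
    have hBh : ∑ s ∈ B, h s = ∑ s ∈ B, ρ s := by
      refine Finset.sum_congr rfl fun s hs => ?_
      have hω0 : ω s = 0 := le_antisymm (not_lt.mp (Finset.mem_filter.mp hs).2) (hωnn s)
      simp [hhdef, hω0]
    have hBρ : ∑ s ∈ B, ρ s ≤ 1 := sum_le_hasSum B (fun s _ => hρnn s) hρ
    have hAρ : ∑ s ∈ A, ρ s ≤ 1 := sum_le_hasSum A (fun s _ => hρnn s) hρ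
    have hAωnn : (0:ℝ) ≤ ∑ s ∈ A, ω s := Finset.sum_nonneg fun s _ => hωnn s
    have hAh : ∑ s ∈ A, h s
        = (∑ s ∈ A, ω s * Real.log (ω s / ρ s)) - ∑ s ∈ A, ω s + ∑ s ∈ A, ρ s := by
      simp only [hhdef]
      rw [Finset.sum_add_distrib, Finset.sum_sub_distrib]
    have hAf : M + 2 ≤ ∑ s ∈ A, ω s * Real.log (ω s / ρ s) := by
      have := hsplit
      rw [hBh, hAh] at this
      linarith
    obtain ⟨g, hg⟩ := key_lower ω ρ hωnn hω hρnn hρ habs A hAmem 1 zero_le_one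
    have hlog2 : Real.log (1 + Real.exp (-1)) ≤ 1 := by
      have h1 := Real.log_le_sub_one_of_pos (x := 1 + Real.exp (-1 : ℝ)) (by positivity)
      have h2 : Real.exp (-1 : ℝ) ≤ 1 := by
        rw [← Real.exp_zero]
        exact Real.exp_le_exp.2 (by norm_num)
      linarith
    have hωle1 : ∑ s ∈ A, ω s ≤ 1 := sum_le_hasSum A (fun s _ => hωnn s) hω
    have hval : M ≤ (∑' s, g.1 s * ω s) - Real.log (∑' s, Real.exp (g.1 s) * ρ s) := by
      have h1 : 1 * (1 - ∑ s ∈ A, ω s) ≤ 1 := by linarith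
      linarith
    calc (M : EReal)
        ≤ (((∑' s, g.1 s * ω s) - Real.log (∑' s, Real.exp (g.1 s) * ρ s) : ℝ) : EReal) :=
          EReal.coe_le_coe_iff.2 hval
      _ ≤ _ := le_iSup (fun g : {g : S → ℝ // ∃ C, ∀ s, |g s| ≤ C} =>
          (((∑' s, g.1 s * ω s) - Real.log (∑' s, Real.exp (g.1 s) * ρ s) : ℝ) : EReal)) g
end
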